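/- For every δ > 0 there exists c(δ) > 0 such that every finite simple graph G on n vertices containing at least δ n² pairwise edge-disjoint triangles must contain at least c(δ) n³ triangles in total. -/

import Mathlib

open SimpleGraph Finset

/-- **Triangle removal lemma, second formulation.** For every `δ > 0` there is
`c(δ) > 0` such that a graph on `n` vertices containing at least `δ n²`
pairwise edge-disjoint triangles contains at least `c(δ) n³` triangles. -/
theorem triangle_counting (δ : ℝ) (hδ : 0 < δ) :
    ∃ c : ℝ, 0 < c ∧ ∀ (n : ℕ) (G : SimpleGraph (Fin n))
      (𝒯 : Set (Finset (Fin n))),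
      (∀ t ∈ 𝒯, G.IsNClique 3 t) →
      (∀ t₁ ∈ 𝒯, ∀ t₂ ∈ 𝒯, t₁ ≠ t₂ → (t₁ ∩ t₂).card ≤ 1) →
      δ * (n : ℝ) ^ 2 ≤ 𝒯.ncard →
      c * (n : ℝ) ^ 3 ≤ ((G.cliqueSet 3).ncard : ℝ) := by
  classical
  set ε : ℝ := min δ (1/4) with hε
  have hε0 : 0 < ε := lt_min hδ (by norm_num)
  have hε1 : ε ≤ 1 := (min_le_right _ _).trans (by norm_num)
  refine ⟨SimpleGraph.triangleRemovalBound ε, triangleRemovalBound_pos hε0, ?_⟩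
  intro n G 𝒯 hclique hdisj hbig
  have hfin : 𝒯.Finite := Set.toFinite _
  have htris : hfin.toFinset ⊆ G.cliqueFinset 3 := by
    intro t ht
    rw [Set.Finite.mem_toFinset] at ht
    exact mem_cliqueFinset_iff.2 (hclique t ht)
  have hpd : (hfin.toFinset : Set (Finset (Fin n))).Pairwise
      fun x y ↦ ((x : Set (Fin n)) ∩ y).Subsingleton := by
    intro x hx y hy hxy
    rw [Set.Finite.coe_toFinset] at hx hy
    rintro a ⟨ha1, ha2⟩ b ⟨hb1, hb2⟩
    exact Finset.card_le_one.1 (hdisj x hx y hy hxy) a (by simpa using ⟨ha1, ha2⟩)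
      b (by simpa using ⟨hb1, hb2⟩)
  have hfar : G.FarFromTriangleFree ε := by
    apply farFromTriangleFree_of_disjoint_triangles hfin.toFinset htris hpd
    calc ε * ((Fintype.card (Fin n)) ^ 2 : ℕ) ≤ δ * (n:ℝ)^2 := by
            push_cast [Fintype.card_fin]
            gcongr; exact min_le_left _ _
      _ ≤ 𝒯.ncard := hbig
      _ = #hfin.toFinset := by rw [Set.ncard_eq_toFinset_card _ hfin]
  have := hfar.le_card_cliqueFinset
  rw [Fintype.card_fin] at this
  calc SimpleGraph.triangleRemovalBound ε * (n:ℝ)^3 ≤ #(G.cliqueFinset 3) := by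
        exact_mod_cast this
    _ = ((G.cliqueSet 3).ncard : ℝ) := by
        rw [← coe_cliqueFinset, Set.ncard_coe_finset]
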